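/- arXiv:0906.0555 — 4 statements merged into one kernel-verified Lean document; each statement's English description precedes it below -/
import Mathlib

section
/- For any finite set S of points in ℝ^n with |S| = m ≥ 1, there exists a nonzero polynomial Q in n variables with real coefficients vanishing at every point of S, whose total degree is at most n·m^(1/n) (more precisely, of degree at most d whenever the dimension of the space of polynomials of degree ≤ d exceeds m, i.e. whenever (d+n choose n) > m). -/
open MvPolynomial

lemma sum_count_univ {n : ℕ} (m : Multiset (Fin n)) :
    ∑ i : Fin n, m.count i = Multiset.card m := by
  rw [← Multiset.toFinset_sum_count_eq m]
  refine (Finset.sum_subset (Finset.subset_univ _) ?_).symm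
  intro x _ hx
  simpa [Multiset.count_eq_zero] using fun h => hx (Multiset.mem_toFinset.mpr h)

lemma finite_low_deg (n d : ℕ) : Finite {s : Fin n →₀ ℕ // (s.sum fun _ e => e) ≤ d} := by
  refine Finite.of_injective
    (fun s => (fun i : Fin n => (⟨s.1 i, ?_⟩ : Fin (d + 1)))) ?_
  · have h1 : s.1 i ≤ s.1.sum fun _ e => e := by
      by_cases h : s.1 i = 0
      · simp [h]
      · exact Finset.single_le_sum (f := fun j => s.1 j) (fun _ _ => Nat.zero_le _)
          (Finsupp.mem_support_iff.mpr h)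
    omega
  · intro s t h
    apply Subtype.ext
    apply Finsupp.ext
    intro i
    have := congrFun h i
    simpa [Fin.ext_iff] using this

lemma card_ge (n d : ℕ) :
    (d + n).choose n ≤
      Nat.card {s : Fin n →₀ ℕ // (s.sum fun _ e => e) ≤ d} := by
  classical
  have hfin := finite_low_deg n d
  have key : Function.Injective
      (fun m : Sym (Fin (n + 1)) d =>
        (⟨Finsupp.equivFunOnFinite.symm (fun i : Fin n => m.1.count i.castSucc), by
          rw [Finsupp.sum_fintype _ _ (fun _ => rfl)]
          simp only [Finsupp.coe_equivFunOnFinite_symm]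
          have h1 : ∑ i : Fin (n+1), m.1.count i = Multiset.card m.1 := sum_count_univ m.1
          rw [Fin.sum_univ_castSucc] at h1
          have := m.2
          omega⟩ : {s : Fin n →₀ ℕ // (s.sum fun _ e => e) ≤ d})) := by
    intro m₁ m₂ h
    have hc : ∀ i : Fin n, m₁.1.count i.castSucc = m₂.1.count i.castSucc := by
      intro i
      have := congrArg (fun s => (s.1 : (Fin n →₀ ℕ)) i) h
      simpa using this
    have h1 : ∑ i : Fin (n+1), m₁.1.count i = d := by rw [sum_count_univ, m₁.2]
    have h2 : ∑ i : Fin (n+1), m₂.1.count i = d := by rw [sum_count_univ, m₂.2]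
    rw [Fin.sum_univ_castSucc] at h1 h2
    have hsum : ∑ i : Fin n, m₁.1.count i.castSucc = ∑ i : Fin n, m₂.1.count i.castSucc :=
      Finset.sum_congr rfl fun i _ => hc i
    have hlast : m₁.1.count (Fin.last n) = m₂.1.count (Fin.last n) := by omega
    apply Subtype.ext
    apply Multiset.ext.mpr
    intro j
    induction j using Fin.lastCases with
    | last => exact hlast
    | cast i => exact hc i
  calc (d + n).choose n = Nat.card (Sym (Fin (n + 1)) d) := by
        rw [Nat.card_eq_fintype_card, Sym.card_sym_eq_choose]
        simp only [Fintype.card_fin]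
        have h1 : n + 1 + d - 1 = d + n := by omega
        rw [h1, ← Nat.choose_symm (by omega : n ≤ d + n)]
        congr 1
        omega
    _ ≤ Nat.card {s : Fin n →₀ ℕ // (s.sum fun _ e => e) ≤ d} :=
        Nat.card_le_card_of_injective _ key

theorem stmt_0 (n : ℕ) (hn : 1 ≤ n) (S : Finset (Fin n → ℝ)) (hS : 1 ≤ S.card)
    (d : ℕ) (hd : S.card < (d + n).choose n) :
    ∃ Q : MvPolynomial (Fin n) ℝ, Q ≠ 0 ∧ Q.totalDegree ≤ d ∧
      ∀ x ∈ S, MvPolynomial.eval x Q = 0 := by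
  classical
  set V := restrictTotalDegree (Fin n) ℝ d with hV
  let L : V →ₗ[ℝ] (S → ℝ) :=
    { toFun := fun p x => MvPolynomial.eval (x : Fin n → ℝ) (p : MvPolynomial (Fin n) ℝ)
      map_add' := by intro p q; ext x; simp
      map_smul' := by intro c p; ext x; simp }
  have hrankV : (d + n).choose n ≤ Module.finrank ℝ V := by
    have b := basisRestrictSupport ℝ { s : Fin n →₀ ℕ | (s.sum fun _ e => e) ≤ d }
    have hfin := finite_low_deg n d
    have hft : Fintype {s : Fin n →₀ ℕ // (s.sum fun _ e => e) ≤ d} := Fintype.ofFinite _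
    have hr : Module.finrank ℝ V = Fintype.card {s : Fin n →₀ ℕ // (s.sum fun _ e => e) ≤ d} :=
      Module.finrank_eq_card_basis b
    rw [hr, ← Nat.card_eq_fintype_card]
    exact card_ge n d
  have hcod : Module.finrank ℝ (S → ℝ) = S.card := by
    simp [Module.finrank_fintype_fun_eq_card]
  have hfinV : Module.Finite ℝ V := by
    have b := basisRestrictSupport ℝ { s : Fin n →₀ ℕ | (s.sum fun _ e => e) ≤ d }
    haveI : Finite ↑{ s : Fin n →₀ ℕ | (s.sum fun _ e => e) ≤ d} := finite_low_deg n d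
    exact Module.Finite.of_basis b
  have hnotinj : ¬ Function.Injective L := by
    intro hinj
    have := LinearMap.finrank_le_finrank_of_injective hinj
    rw [hcod] at this
    omega
  rw [← LinearMap.ker_eq_bot] at hnotinj
  obtain ⟨p, hp, hp0⟩ := Submodule.ne_bot_iff _ |>.mp hnotinj
  refine ⟨(p : MvPolynomial (Fin n) ℝ), ?_, ?_, ?_⟩
  · simpa [Submodule.coe_eq_zero] using hp0
  · exact (mem_restrictTotalDegree (Fin n) d (p : MvPolynomial (Fin n) ℝ)).mp p.2
  · intro x hx
    have := congrFun (LinearMap.mem_ker.mp hp) ⟨x, hx⟩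
    simpa [L] using this
end

section
/- (Joints vanishing lemma) Let L be a finite set of lines in ℝ^n (n ≥ 2), let J' be a finite set of points each of which is a joint of L (i.e., lies on n lines of L with linearly independent directions), and suppose every line ℓ ∈ L that meets J' contains at least m points of J'. If Q is a nonzero polynomial of degree < m vanishing on all of J', then a contradiction arises; consequently every polynomial of degree < m vanishing on J' is zero. -/
open MvPolynomial

/-- A line in ℝⁿ, given by a base point and a nonzero direction vector. -/
structure Line (n : ℕ) where
  p : Fin n → ℝ
  v : Fin n → ℝ
  hv : v ≠ 0

/-- The set of points of a line. -/
def Line.carrier {n : ℕ} (ℓ : Line n) : Set (Fin n → ℝ) :=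
  {x | ∃ t : ℝ, x = ℓ.p + t • ℓ.v}

/-- `x` is a joint of the collection of lines `L`: it lies on `n` lines of `L`
whose directions are linearly independent. -/
def IsJoint {n : ℕ} (L : Finset (Line n)) (x : Fin n → ℝ) : Prop :=
  ∃ f : Fin n → Line n, (∀ i, f i ∈ L) ∧ (∀ i, x ∈ (f i).carrier) ∧
    LinearIndependent ℝ (fun i => (f i).v)

/-- The set of joints of `L`. -/
def joints {n : ℕ} (L : Finset (Line n)) : Set (Fin n → ℝ) :=
  {x | IsJoint L x}


open Polynomial


lemma chain {n : ℕ} (g : Fin n → Polynomial ℝ) (Q : MvPolynomial (Fin n) ℝ) :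
    Polynomial.derivative (MvPolynomial.aeval g Q)
      = ∑ i, Polynomial.derivative (g i) * MvPolynomial.aeval g (MvPolynomial.pderiv i Q) := by
  induction Q using MvPolynomial.induction_on with
  | C a => simp
  | add p q hp hq => simp [hp, hq, Finset.sum_add_distrib, mul_add]
  | mul_X p j hp =>
      have key : ∀ i : Fin n, MvPolynomial.aeval g (MvPolynomial.pderiv i (p * MvPolynomial.X j))
          = MvPolynomial.aeval g (MvPolynomial.pderiv i p) * g j
            + (if j = i then MvPolynomial.aeval g p else 0) := by
        intro i
        rw [MvPolynomial.pderiv_mul]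
        by_cases h : j = i
        · subst h; simp [MvPolynomial.pderiv_X_self]
        · simp [MvPolynomial.pderiv_X_of_ne h, h]
      simp only [map_mul, MvPolynomial.aeval_X, Polynomial.derivative_mul, hp, key, mul_add,
        Finset.sum_add_distrib, Finset.sum_mul, mul_ite, mul_zero, Finset.sum_ite_eq,
        Finset.mem_univ, if_true]
      congr 1
      · exact Finset.sum_congr rfl fun i _ => mul_assoc _ _ _
      · exact mul_comm _ _

lemma natdeg_aeval_le {n : ℕ} (g : Fin n → Polynomial ℝ) (hg : ∀ i, (g i).natDegree ≤ 1)
    (Q : MvPolynomial (Fin n) ℝ) :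
    (MvPolynomial.aeval g Q).natDegree ≤ Q.totalDegree := by
  conv_lhs => rw [Q.as_sum]
  rw [map_sum]
  apply Polynomial.natDegree_sum_le_of_forall_le
  intro d hd
  rw [MvPolynomial.aeval_monomial]
  refine (Polynomial.natDegree_mul_le).trans ?_
  have h1 : (algebraMap ℝ ℝ[X] (MvPolynomial.coeff d Q)).natDegree = 0 := by
    simp [Polynomial.natDegree_C]
  rw [h1, zero_add]
  refine (Polynomial.natDegree_prod_le _ _).trans ?_
  refine le_trans ?_ (MvPolynomial.le_totalDegree hd)
  rw [Finsupp.sum]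
  apply Finset.sum_le_sum
  intro i _
  exact Polynomial.natDegree_pow_le.trans (by
    calc d i * (g i).natDegree ≤ d i * 1 := Nat.mul_le_mul_left _ (hg i)
    _ = d i := Nat.mul_one _)

lemma coeff_pderiv {n : ℕ} (i : Fin n) (e : Fin n →₀ ℕ) (Q : MvPolynomial (Fin n) ℝ) :
    MvPolynomial.coeff e (MvPolynomial.pderiv i Q)
      = (e i + 1 : ℕ) * MvPolynomial.coeff (e + Finsupp.single i 1) Q := by
  induction Q using MvPolynomial.induction_on' with
  | add p q hp hq => simp [hp, hq, mul_add]
  | monomial s a =>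
    rw [MvPolynomial.pderiv_monomial]
    simp only [MvPolynomial.coeff_monomial]
    by_cases h : s = e + Finsupp.single i 1
    · subst h
      have h1 : e + Finsupp.single i 1 - Finsupp.single i 1 = e :=
        add_tsub_cancel_right e _
      rw [if_pos h1, if_pos rfl]
      rw [Finsupp.add_apply, Finsupp.single_apply, if_pos rfl]
      push_cast
      ring
    · rw [if_neg h]
      by_cases h2 : s - Finsupp.single i 1 = e
      · by_cases h3 : s i = 0
        · simp [h3]
        · exfalso
          apply h
          ext j
          have hji := DFunLike.congr_fun h2 j
          simp only [Finsupp.sub_apply, Finsupp.coe_add, Pi.add_apply,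
            Finsupp.single_apply] at hji ⊢
          by_cases hj : i = j
          · subst hj
            simp at hji ⊢
            omega
          · simp [hj] at hji ⊢
            omega
      · simp [h2]

lemma deg_zero_of_pderiv {n : ℕ} (Q : MvPolynomial (Fin n) ℝ)
    (h : ∀ i, MvPolynomial.pderiv i Q = 0) : Q.totalDegree = 0 := by
  rw [MvPolynomial.totalDegree_eq_zero_iff]
  intro d hd i
  by_contra hdi
  have hle : Finsupp.single i 1 ≤ d := by
    rw [Finsupp.single_le_iff]; omega
  have hde : (d - Finsupp.single i 1) + Finsupp.single i 1 = d := tsub_add_cancel_of_le hle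
  have := coeff_pderiv i (d - Finsupp.single i 1) Q
  rw [h i, hde, MvPolynomial.coeff_zero] at this
  have hzero : MvPolynomial.coeff d Q = 0 := by
    have hne : (((d - Finsupp.single i 1 : Fin n →₀ ℕ) i + 1 : ℕ) : ℝ) ≠ 0 := by
      exact Nat.cast_ne_zero.mpr (Nat.succ_ne_zero _)
    exact (mul_eq_zero.mp this.symm).resolve_left hne
  exact MvPolynomial.mem_support_iff.mp hd hzero

lemma totalDegree_pderiv_lt' {n : ℕ} (Q : MvPolynomial (Fin n) ℝ) (h : 0 < Q.totalDegree)
    (i : Fin n) : (MvPolynomial.pderiv i Q).totalDegree < Q.totalDegree := by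
  rw [MvPolynomial.totalDegree, Finset.sup_lt_iff h]
  intro e he
  have hc : MvPolynomial.coeff (e + Finsupp.single i 1) Q ≠ 0 := by
    intro h0
    have := coeff_pderiv i e Q
    rw [h0, mul_zero] at this
    exact MvPolynomial.mem_support_iff.mp he this
  have hmem : e + Finsupp.single i 1 ∈ Q.support := MvPolynomial.mem_support_iff.mpr hc
  have hle := MvPolynomial.le_totalDegree hmem
  have hsum : ((e + Finsupp.single i 1).sum fun _ k => k) = (e.sum fun _ k => k) + 1 := by
    rw [Finsupp.sum_add_index' (fun _ => rfl) (fun _ _ _ => rfl), Finsupp.sum_single_index rfl]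
  omega

lemma eval_line {n : ℕ} (p v : Fin n → ℝ) (Q : MvPolynomial (Fin n) ℝ) (t : ℝ) :
    Polynomial.eval t (MvPolynomial.aeval
        (fun i => Polynomial.C (p i) + Polynomial.C (v i) * Polynomial.X) Q)
      = MvPolynomial.eval (p + t • v) Q := by
  induction Q using MvPolynomial.induction_on with
  | C a => simp
  | add q r hq hr => simp [hq, hr]
  | mul_X q j hq =>
      simp only [map_mul, MvPolynomial.aeval_X, Polynomial.eval_mul, Polynomial.eval_add,
        Polynomial.eval_C, Polynomial.eval_X, hq, MvPolynomial.eval_mul, MvPolynomial.eval_X,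
        Pi.add_apply, Pi.smul_apply, smul_eq_mul]
      ring

lemma const_zero {n : ℕ} (Q : MvPolynomial (Fin n) ℝ) (h0 : Q.totalDegree = 0)
    {x : Fin n → ℝ} (hx : MvPolynomial.eval x Q = 0) : Q = 0 := by
  have hQC : Q = MvPolynomial.C (MvPolynomial.coeff 0 Q) := by
    ext d
    by_cases hd : d = 0
    · subst hd; simp
    · rw [MvPolynomial.coeff_C, if_neg (Ne.symm hd)]
      by_contra hne
      have hd' : d ∈ Q.support := MvPolynomial.mem_support_iff.mpr hne
      have := (MvPolynomial.totalDegree_eq_zero_iff (Fin n) Q).mp h0 d hd'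
      exact hd (Finsupp.ext this)
  rw [hQC] at hx ⊢
  simp only [MvPolynomial.eval_C] at hx
  rw [hx, map_zero]

lemma line_zero {n m : ℕ} (J' : Finset (Fin n → ℝ)) (ℓ : Line n)
    (hm : m ≤ ((J' : Set (Fin n → ℝ)) ∩ ℓ.carrier).ncard)
    (Q : MvPolynomial (Fin n) ℝ) (hdeg : Q.totalDegree < m)
    (hvan : ∀ x ∈ J', MvPolynomial.eval x Q = 0) :
    MvPolynomial.aeval
      (fun i => Polynomial.C (ℓ.p i) + Polynomial.C (ℓ.v i) * Polynomial.X) Q = 0 := by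
  classical
  obtain ⟨i0, hi0⟩ : ∃ i0, ℓ.v i0 ≠ 0 := Function.ne_iff.mp ℓ.hv
  set par : (Fin n → ℝ) → ℝ := fun x => (x i0 - ℓ.p i0) / ℓ.v i0 with hpar
  have hpart : ∀ x ∈ ℓ.carrier, x = ℓ.p + par x • ℓ.v := by
    rintro x ⟨t, rfl⟩
    have : par (ℓ.p + t • ℓ.v) = t := by
      simp only [hpar, Pi.add_apply, Pi.smul_apply, smul_eq_mul]
      field_simp
      ring
    rw [this]
  set F : Finset (Fin n → ℝ) := J'.filter (fun x => x ∈ ℓ.carrier) with hF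
  have hFset : (F : Set (Fin n → ℝ)) = (J' : Set (Fin n → ℝ)) ∩ ℓ.carrier := by
    ext x; simp [hF, Set.mem_inter_iff]
  have hcardF : m ≤ F.card := by
    rwa [← hFset, Set.ncard_coe_finset] at hm
  set T : Finset ℝ := F.image par with hT
  have hinj : Set.InjOn par F := by
    intro x hx y hy hxy
    have hxc : x ∈ ℓ.carrier := (Finset.mem_filter.mp hx).2
    have hyc : y ∈ ℓ.carrier := (Finset.mem_filter.mp hy).2
    rw [hpart x hxc, hpart y hyc, hxy]
  have hcardT : m ≤ T.card := by
    rw [hT, Finset.card_image_of_injOn hinj]; exact hcardF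
  apply Polynomial.eq_zero_of_natDegree_lt_card_of_eval_eq_zero' _ T
  · intro t ht
    obtain ⟨x, hxF, rfl⟩ := Finset.mem_image.mp ht
    rw [eval_line]
    rw [← hpart x (Finset.mem_filter.mp hxF).2]
    exact hvan x (Finset.mem_filter.mp hxF).1
  · refine lt_of_lt_of_le (lt_of_le_of_lt (natdeg_aeval_le _ ?_ Q) hdeg) hcardT
    intro i
    refine (Polynomial.natDegree_add_le _ _).trans ?_
    have h2 : (Polynomial.C (ℓ.v i) * Polynomial.X).natDegree ≤ 1 :=
      (Polynomial.natDegree_C_mul_le _ _).trans (by simp)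
    simp only [Polynomial.natDegree_C]
    omega

theorem stmt_6 (n : ℕ) (hn : 2 ≤ n) (L : Finset (Line n))
    (J' : Finset (Fin n → ℝ)) (hJ'ne : J'.Nonempty)
    (hjoint : ∀ x ∈ J', IsJoint L x) (m : ℕ)
    (hmeet : ∀ ℓ ∈ L, ((J' : Set (Fin n → ℝ)) ∩ ℓ.carrier).Nonempty →
      m ≤ ((J' : Set (Fin n → ℝ)) ∩ ℓ.carrier).ncard)
    (Q : MvPolynomial (Fin n) ℝ) (hdeg : Q.totalDegree < m)
    (hvan : ∀ x ∈ J', MvPolynomial.eval x Q = 0) :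
    Q = 0 := by
  classical
  have hne : Nonempty (Fin n) := ⟨⟨0, by omega⟩⟩
  have grad : ∀ (Q : MvPolynomial (Fin n) ℝ), Q.totalDegree < m →
      (∀ x ∈ J', MvPolynomial.eval x Q = 0) →
      ∀ x ∈ J', ∀ i, MvPolynomial.eval x (MvPolynomial.pderiv i Q) = 0 := by
    intro Q hdeg hvan x hx i
    obtain ⟨f, hfL, hfx, hli⟩ := hjoint x hx
    set w : Fin n → ℝ := fun i => MvPolynomial.eval x (MvPolynomial.pderiv i Q) with hw
    have hline : ∀ j, ∑ i', (f j).v i' * w i' = 0 := by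
      intro j
      have hnej : ((J' : Set (Fin n → ℝ)) ∩ (f j).carrier).Nonempty := ⟨x, hx, hfx j⟩
      have hz := line_zero J' (f j) (hmeet _ (hfL j) hnej) Q hdeg hvan
      have hd := chain
        (fun i => Polynomial.C ((f j).p i) + Polynomial.C ((f j).v i) * Polynomial.X) Q
      rw [hz, map_zero] at hd
      obtain ⟨t, ht⟩ := hfx j
      have h0 : (0:ℝ) = ∑ i', (f j).v i' * w i' := by
        calc (0:ℝ) = Polynomial.eval t (0 : Polynomial ℝ) := by simp
        _ = ∑ i', (f j).v i' * w i' := by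
            rw [hd, Polynomial.eval_finset_sum]
            refine Finset.sum_congr rfl fun i' _ => ?_
            rw [Polynomial.eval_mul, eval_line]
            congr 1
            · simp
            · rw [hw, ← ht]
      exact h0.symm
    set φ : (Fin n → ℝ) →ₗ[ℝ] ℝ := ∑ i', w i' • LinearMap.proj i' with hφ
    have hφapp : ∀ y, φ y = ∑ i', w i' * y i' := by
      intro y
      simp [hφ, LinearMap.sum_apply, LinearMap.smul_apply, LinearMap.proj_apply]
    have hcard : Fintype.card (Fin n) = Module.finrank ℝ (Fin n → ℝ) := by simp
    set B := basisOfLinearIndependentOfCardEqFinrank hli hcard with hB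
    have hφ0 : φ = 0 := by
      apply B.ext
      intro j
      rw [hB, coe_basisOfLinearIndependentOfCardEqFinrank]
      rw [hφapp]
      simp only [LinearMap.zero_apply]
      rw [← hline j]
      exact Finset.sum_congr rfl fun i' _ => mul_comm _ _
    have hwi : w i = 0 := by
      have h := LinearMap.congr_fun hφ0 (Pi.single i 1)
      rw [hφapp] at h
      simpa [Pi.single_apply, mul_ite] using h
    exact hwi
  suffices H : ∀ k (Q : MvPolynomial (Fin n) ℝ), Q.totalDegree ≤ k → Q.totalDegree < m →
      (∀ x ∈ J', MvPolynomial.eval x Q = 0) → Q = 0 by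
    exact H Q.totalDegree Q le_rfl hdeg hvan
  intro k
  induction k with
  | zero =>
      intro Q hk _ hv
      obtain ⟨x0, hx0⟩ := hJ'ne
      exact const_zero Q (Nat.le_zero.mp hk) (hv x0 hx0)
  | succ k ih =>
      intro Q hk hdm hv
      by_cases h0 : Q.totalDegree = 0
      · obtain ⟨x0, hx0⟩ := hJ'ne
        exact const_zero Q h0 (hv x0 hx0)
      · have hpz : ∀ i, MvPolynomial.pderiv i Q = 0 := by
          intro i
          have hlt := totalDegree_pderiv_lt' Q (Nat.pos_of_ne_zero h0) i
          exact ih (MvPolynomial.pderiv i Q) (by omega) (lt_trans hlt hdm)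
            (fun x hx => grad Q hdm hv x hx i)
        exact absurd (deg_zero_of_pderiv Q hpz) h0
end

section
/- (Joints for polynomial curves, vanishing lemma) Let 𝓒 be a finite set of smooth curves in ℝ^n, each parametrized by polynomials of degree at most d with nowhere-vanishing derivative, and let J' be a finite set of points each lying on n curves of 𝓒 whose tangent vectors at that point are linearly independent. Suppose every curve of 𝓒 meeting J' contains at least m points of J'. Then every polynomial Q ∈ ℝ[x₁,…,xₙ] of degree < m/d vanishing on J' is the zero polynomial; consequently |J'| ≥ C_n·(m/d)^n for a constant C_n depending only on n. -/
open MvPolynomial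

/-- A polynomially parametrized curve in ℝⁿ. -/
structure PolyCurve (n : ℕ) where
  P : Fin n → Polynomial ℝ

/-- The point of the curve at parameter `t`. -/
def PolyCurve.eval {n : ℕ} (γ : PolyCurve n) (t : ℝ) : Fin n → ℝ :=
  fun i => (γ.P i).eval t

/-- The tangent vector of the curve at parameter `t`. -/
noncomputable def PolyCurve.tangent {n : ℕ} (γ : PolyCurve n) (t : ℝ) : Fin n → ℝ :=
  fun i => (Polynomial.derivative (γ.P i)).eval t

/-- The curve is smooth: its tangent vector never vanishes. -/
def PolyCurve.Smooth {n : ℕ} (γ : PolyCurve n) : Prop :=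
  ∀ t : ℝ, γ.tangent t ≠ 0

/-- All coordinate polynomials have degree at most `d`. -/
def PolyCurve.DegLE {n : ℕ} (γ : PolyCurve n) (d : ℕ) : Prop :=
  ∀ i, (γ.P i).natDegree ≤ d

/-- The set of points of the curve. -/
def PolyCurve.carrier {n : ℕ} (γ : PolyCurve n) : Set (Fin n → ℝ) :=
  {x | ∃ t : ℝ, γ.eval t = x}

/-- `x` is a joint of the collection of curves `𝓒`: there are `n` curves of `𝓒`
passing through `x` whose tangent vectors at `x` are linearly independent. -/
def IsCurveJoint {n : ℕ} (𝓒 : Finset (PolyCurve n)) (x : Fin n → ℝ) : Prop :=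
  ∃ (g : Fin n → PolyCurve n) (τ : Fin n → ℝ),
    (∀ i, g i ∈ 𝓒) ∧ (∀ i, (g i).eval (τ i) = x) ∧
      LinearIndependent ℝ (fun i => (g i).tangent (τ i))

namespace Stmt15Aux

variable {n : ℕ}

lemma eval_aeval' (f : Fin n → Polynomial ℝ) (Q : MvPolynomial (Fin n) ℝ) (t : ℝ) :
    Polynomial.eval t (MvPolynomial.aeval f Q) =
      MvPolynomial.eval (fun i => (f i).eval t) Q := by
  induction Q using MvPolynomial.induction_on with
  | C a => simp
  | add p q hp hq => simp [hp, hq]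
  | mul_X p i hp => simp [hp]

lemma coeff_pderiv (i : Fin n) (Q : MvPolynomial (Fin n) ℝ) (u : Fin n →₀ ℕ) :
    coeff u (pderiv i Q) = ((u i : ℝ) + 1) * coeff (u + Finsupp.single i 1) Q := by
  induction Q using MvPolynomial.induction_on' with
  | monomial s a =>
    rw [pderiv_monomial]
    by_cases h : s = u + Finsupp.single i 1
    · subst h
      have h1 : (u + Finsupp.single i 1) - Finsupp.single i 1 = u := by
        exact add_tsub_cancel_right u _
      have h2 : ((u + Finsupp.single i 1 : Fin n →₀ ℕ)) i = u i + 1 := by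
        rw [Finsupp.add_apply, Finsupp.single_eq_same]
      rw [h1, h2, coeff_monomial, coeff_monomial, if_pos rfl, if_pos rfl]
      push_cast
      ring
    · rw [coeff_monomial, coeff_monomial, if_neg h]
      by_cases hsi : s i = 0
      · simp [hsi]
      · rw [if_neg, mul_zero]
        intro heq
        apply h
        rw [← heq, tsub_add_cancel_of_le]
        exact Finsupp.single_le_iff.mpr (Nat.one_le_iff_ne_zero.mpr hsi)
  | add p q hp hq =>
    simp [map_add, hp, hq]
    ring

lemma derivative_aeval (f : Fin n → Polynomial ℝ) (Q : MvPolynomial (Fin n) ℝ) :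
    Polynomial.derivative (MvPolynomial.aeval f Q) =
      ∑ i : Fin n, MvPolynomial.aeval f (pderiv i Q) * Polynomial.derivative (f i) := by
  induction Q using MvPolynomial.induction_on with
  | C a => simp
  | add p q hp hq =>
    simp only [map_add, hp, hq, add_mul, ← Finset.sum_add_distrib]
  | mul_X p j hp =>
    simp only [map_mul, aeval_X, Polynomial.derivative_mul, hp]
    have : ∀ i : Fin n, MvPolynomial.aeval f (pderiv i (p * X j)) * Polynomial.derivative (f i) =
        MvPolynomial.aeval f (pderiv i p) * Polynomial.derivative (f i) * f j +
          (if j = i then MvPolynomial.aeval f p * Polynomial.derivative (f i) else 0) := by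
      intro i
      rw [pderiv_mul, map_add, map_mul, map_mul, aeval_X, pderiv_X]
      rcases eq_or_ne j i with rfl | hij
      · simp [Pi.single_eq_same]; ring
      · simp [Pi.single_eq_of_ne (Ne.symm hij) , hij]
        ring
    rw [Finset.sum_congr rfl fun i _ => this i, Finset.sum_add_distrib, ← Finset.sum_mul,
      Finset.sum_ite_eq Finset.univ j
        (fun i => MvPolynomial.aeval f p * Polynomial.derivative (f i)), if_pos (Finset.mem_univ j)]

lemma support_sum_lt {Q : MvPolynomial (Fin n) ℝ} {i : Fin n} {u : Fin n →₀ ℕ}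
    (hu : u ∈ (pderiv i Q).support) : (u.sum fun _ e => e) + 1 ≤ Q.totalDegree := by
  have h1 : coeff (u + Finsupp.single i 1) Q ≠ 0 := by
    intro h0
    apply MvPolynomial.mem_support_iff.mp hu
    rw [coeff_pderiv, h0, mul_zero]
  have h2 : (u + Finsupp.single i 1) ∈ Q.support := MvPolynomial.mem_support_iff.mpr h1
  have h3 := MvPolynomial.le_totalDegree h2
  rw [Finsupp.sum_add_index' (fun _ => rfl) (fun _ _ _ => rfl),
    Finsupp.sum_single_index rfl] at h3
  exact h3

lemma totalDegree_eq_zero_of_pderiv (Q : MvPolynomial (Fin n) ℝ)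
    (h : ∀ i, pderiv i Q = 0) : Q.totalDegree = 0 := by
  by_contra hD
  have hQ : Q ≠ 0 := fun h0 => hD (by simp [h0])
  obtain ⟨s, hs, hsup⟩ := Finset.exists_mem_eq_sup Q.support
    (MvPolynomial.support_nonempty.mpr hQ) fun s => s.sum fun _ e => e
  have htds : Q.totalDegree = s.sum fun _ e => e := by
    rw [MvPolynomial.totalDegree]; exact hsup
  have hpos : 0 < s.sum fun _ e => e := Nat.pos_of_ne_zero (htds ▸ hD)
  obtain ⟨i, hi⟩ : ∃ i, s i ≠ 0 := by
    by_contra hall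
    push_neg at hall
    have hs0 : s = 0 := Finsupp.ext fun x => hall x
    rw [hs0] at hpos
    simp at hpos
  have hle : Finsupp.single i 1 ≤ s := Finsupp.single_le_iff.mpr (Nat.one_le_iff_ne_zero.mpr hi)
  have := coeff_pderiv i Q (s - Finsupp.single i 1)
  rw [h i, tsub_add_cancel_of_le hle] at this
  have hz : ((s - Finsupp.single i 1 : Fin n →₀ ℕ) i : ℝ) + 1 ≠ 0 := by
    positivity
  have : coeff s Q = 0 := by
    have := this.symm
    simp only [coeff_zero] at this
    exact (mul_eq_zero.mp this).resolve_left hz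
  exact MvPolynomial.mem_support_iff.mp hs this

lemma eq_C_of_totalDegree_eq_zero (Q : MvPolynomial (Fin n) ℝ) (h : Q.totalDegree = 0) :
    Q = C (coeff 0 Q) := by
  ext s
  rcases eq_or_ne s 0 with rfl | hs
  · simp
  · have hns : s ∉ Q.support := by
      intro hmem
      exact hs (Finsupp.ext fun x => (MvPolynomial.totalDegree_eq_zero_iff _ Q).mp h s hmem x)
    rw [MvPolynomial.notMem_support_iff.mp hns, coeff_C, if_neg (Ne.symm hs)]

lemma aeval_self (x : Fin n → ℝ) (p : MvPolynomial (Fin n) ℝ) :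
    MvPolynomial.aeval x p = MvPolynomial.eval x p := by
  rw [← MvPolynomial.coe_aeval_eq_eval]; rfl

lemma exists_vanishing (hn : 2 ≤ n) {S : Finset (Fin n → ℝ)} {E : ℕ}
    (h : S.card < (E + 1) ^ n) :
    ∃ Q : MvPolynomial (Fin n) ℝ, Q ≠ 0 ∧ Q.totalDegree ≤ n * E ∧
      ∀ x ∈ S, MvPolynomial.eval x Q = 0 := by
  classical
  set V := MvPolynomial.restrictDegree (Fin n) ℝ E with hVdef
  let e : {f : Fin n →₀ ℕ // ∀ i, f i ≤ E} ≃ (Fin n → Fin (E + 1)) :=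
    { toFun := fun f i => ⟨f.1 i, Nat.lt_succ_of_le (f.2 i)⟩
      invFun := fun g => ⟨Finsupp.equivFunOnFinite.symm (fun i => (g i : ℕ)), fun i => by
        simp [Nat.lt_succ_iff.mp (g i).2]⟩
      left_inv := fun f => Subtype.ext (Finsupp.ext fun i => by simp)
      right_inv := fun g => funext fun i => Fin.ext (by simp) }
  have hfr : Module.finrank ℝ V = (E + 1) ^ n := by
    show Module.finrank ℝ (MvPolynomial.restrictSupport ℝ {f : Fin n →₀ ℕ | ∀ i, f i ≤ E})
      = (E + 1) ^ n
    rw [Module.finrank_eq_card_basis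
      ((MvPolynomial.basisRestrictSupport ℝ {f : Fin n →₀ ℕ | ∀ i, f i ≤ E}).reindex e)]
    simp
  let φ : V →ₗ[ℝ] ((x : S) → ℝ) := LinearMap.pi fun x : S =>
    (MvPolynomial.aeval (x : Fin n → ℝ)).toLinearMap.comp V.subtype
  have hninj : ¬ Function.Injective φ := by
    intro hinj
    have hle := LinearMap.finrank_le_finrank_of_injective hinj
    rw [hfr, Module.finrank_pi ℝ, Fintype.card_coe] at hle
    omega
  obtain ⟨a, b, hab, hne⟩ := Function.not_injective_iff.mp hninj
  refine ⟨((a - b : V) : MvPolynomial (Fin n) ℝ), ?_, ?_, ?_⟩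
  · intro h0
    exact hne (sub_eq_zero.mp (Subtype.ext h0))
  · have hmem : ((a - b : V) : MvPolynomial (Fin n) ℝ) ∈
        MvPolynomial.restrictDegree (Fin n) ℝ E := (a - b).2
    rw [MvPolynomial.mem_restrictDegree] at hmem
    rw [MvPolynomial.totalDegree]
    apply Finset.sup_le
    intro s hs
    calc (s.sum fun _ e => e) = ∑ i ∈ s.support, s i := rfl
      _ ≤ ∑ _i ∈ s.support, E := Finset.sum_le_sum fun i _ => hmem s hs i
      _ = s.support.card * E := by rw [Finset.sum_const, smul_eq_mul]
      _ ≤ n * E := Nat.mul_le_mul_right E (by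
          simpa using (Finset.card_le_univ s.support))
  · intro x hx
    have h0 : φ (a - b) = 0 := by rw [map_sub, hab, sub_self]
    have := congrFun h0 ⟨x, hx⟩
    rw [← aeval_self]
    exact this

lemma vanishing (hn : 2 ≤ n) (d : ℕ) (𝓒 : Finset (PolyCurve n)) (J' : Finset (Fin n → ℝ))
    (m : ℕ) (h𝓒 : ∀ γ ∈ 𝓒, γ.Smooth ∧ γ.DegLE d) (hne : J'.Nonempty)
    (hjoint : ∀ x ∈ J', IsCurveJoint 𝓒 x)
    (hm : ∀ γ ∈ 𝓒, ((J' : Set (Fin n → ℝ)) ∩ γ.carrier).Nonempty →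
      m ≤ ((J' : Set (Fin n → ℝ)) ∩ γ.carrier).ncard) :
    ∀ Q : MvPolynomial (Fin n) ℝ, (Q.totalDegree : ℝ) < (m : ℝ) / d →
      (∀ x ∈ J', MvPolynomial.eval x Q = 0) → Q = 0 := by
  classical
  suffices H : ∀ D : ℕ, ∀ Q : MvPolynomial (Fin n) ℝ, Q.totalDegree = D →
      (Q.totalDegree : ℝ) < (m : ℝ) / d → (∀ x ∈ J', MvPolynomial.eval x Q = 0) → Q = 0 by
    intro Q h1 h2
    exact H _ Q rfl h1 h2
  intro D
  induction D using Nat.strong_induction_on with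
  | _ D IH =>
  intro Q hQD hdeg hvan
  rcases Nat.eq_zero_or_pos d with rfl | hd
  · exfalso
    rw [Nat.cast_zero, div_zero] at hdeg
    exact (Nat.cast_nonneg _).not_gt hdeg
  have hdR : (0 : ℝ) < d := by exact_mod_cast hd
  have hDd : D * d < m := by
    have hr : (D : ℝ) * d < m := by
      rw [← hQD]
      calc ((Q.totalDegree : ℝ)) * d < ((m : ℝ) / d) * d :=
            mul_lt_mul_of_pos_right hdeg hdR
        _ = m := div_mul_cancel₀ _ (ne_of_gt hdR)
    exact_mod_cast hr
  -- Step 1 : every curve of 𝓒 meeting J' kills Q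
  have hcurve : ∀ γ ∈ 𝓒, ((J' : Set (Fin n → ℝ)) ∩ γ.carrier).Nonempty →
      MvPolynomial.aeval γ.P Q = 0 := by
    intro γ hγ hmeet
    set S : Set (Fin n → ℝ) := (J' : Set (Fin n → ℝ)) ∩ γ.carrier with hSdef
    have hfin : S.Finite := Set.Finite.inter_of_left J'.finite_toSet _
    have hcard := hm γ hγ hmeet
    let tf : (Fin n → ℝ) → ℝ := fun x => if h : x ∈ γ.carrier then h.choose else 0
    have htf : ∀ x ∈ S, γ.eval (tf x) = x := by
      intro x hx
      simp only [tf]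
      rw [dif_pos hx.2]
      exact hx.2.choose_spec
    have hinj : Set.InjOn tf S := by
      intro x hx y hy hxy
      rw [← htf x hx, ← htf y hy, hxy]
    set T : Finset ℝ := hfin.toFinset.image tf with hTdef
    have hTcard : T.card = S.ncard := by
      rw [hTdef, Finset.card_image_of_injOn (by rw [Set.Finite.coe_toFinset]; exact hinj),
        Set.ncard_eq_toFinset_card S hfin]
    have hTzero : ∀ t ∈ T, Polynomial.eval t (MvPolynomial.aeval γ.P Q) = 0 := by
      intro t ht
      obtain ⟨x, hx, rfl⟩ := Finset.mem_image.mp ht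
      have hxS : x ∈ S := hfin.mem_toFinset.mp hx
      rw [eval_aeval']
      have hx' : (fun i => Polynomial.eval (tf x) (γ.P i)) = x := htf x hxS
      rw [hx']
      exact hvan x hxS.1
    have hdeg' : (MvPolynomial.aeval γ.P Q).natDegree < T.card := by
      have h1 : (MvPolynomial.aeval γ.P Q).natDegree ≤ D * d :=
        MvPolynomial.aeval_natDegree_le Q (le_of_eq hQD) _ (h𝓒 γ hγ).2
      have h2 : m ≤ T.card := by rw [hTcard]; exact hcard
      omega
    exact Polynomial.eq_zero_of_natDegree_lt_card_of_eval_eq_zero' _ T hTzero hdeg'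
  -- Step 2 : all partial derivatives of Q vanish on J'
  have hpd : ∀ x ∈ J', ∀ i, MvPolynomial.eval x (pderiv i Q) = 0 := by
    intro x hx
    obtain ⟨g, τ, hg𝓒, hgx, hgli⟩ := hjoint x hx
    set w : Fin n → ℝ := fun i => MvPolynomial.eval x (pderiv i Q) with hwdef
    have hsum : ∀ j, ∑ i, w i * (g j).tangent (τ j) i = 0 := by
      intro j
      have hmeet : ((J' : Set (Fin n → ℝ)) ∩ (g j).carrier).Nonempty :=
        ⟨x, hx, ⟨τ j, hgx j⟩⟩
      have h0 := hcurve (g j) (hg𝓒 j) hmeet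
      have hder := derivative_aeval (g j).P Q
      rw [h0, map_zero] at hder
      have hev := congrArg (Polynomial.eval (τ j)) hder
      rw [Polynomial.eval_zero, Polynomial.eval_finset_sum] at hev
      simp only [Polynomial.eval_mul, eval_aeval'] at hev
      have hxeq : (fun i' => Polynomial.eval (τ j) ((g j).P i')) = x := hgx j
      rw [hxeq] at hev
      exact hev.symm
    have hnonempty : Nonempty (Fin n) := ⟨⟨0, by omega⟩⟩
    have hcardn : Fintype.card (Fin n) = Module.finrank ℝ (Fin n → ℝ) := by
      simp [Module.finrank_fin_fun]
    let b := basisOfLinearIndependentOfCardEqFinrank hgli hcardn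
    have hb : ⇑b = fun i => (g i).tangent (τ i) :=
      coe_basisOfLinearIndependentOfCardEqFinrank _ _
    let φ : (Fin n → ℝ) →ₗ[ℝ] ℝ := ∑ i, w i • LinearMap.proj i
    have hφ : ∀ u, φ u = ∑ i, w i * u i := by
      intro u
      simp [φ, LinearMap.proj_apply]
    have hφ0 : φ = 0 := by
      apply b.ext
      intro j
      have hbj : b j = (g j).tangent (τ j) := congrFun hb j
      rw [LinearMap.zero_apply, hbj, hφ]
      exact hsum j
    intro i
    have h0 : φ (Pi.single i 1) = 0 := by rw [hφ0]; rfl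
    rw [hφ] at h0
    rw [Finset.sum_eq_single i (fun k _ hk => by rw [Pi.single_eq_of_ne hk, mul_zero])
      (fun hmem => absurd (Finset.mem_univ i) hmem)] at h0
    rw [Pi.single_eq_same, mul_one] at h0
    exact h0
  -- Step 3 : conclude
  rcases Nat.eq_zero_or_pos D with rfl | hDpos
  · have hC := eq_C_of_totalDegree_eq_zero Q hQD
    obtain ⟨x0, hx0⟩ := hne
    have h0 := hvan x0 hx0
    rw [hC, eval_C] at h0
    rw [hC, h0, map_zero]
  · by_contra hQ0
    have hall : ∀ i, pderiv i Q = 0 := by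
      intro i
      by_cases hpi : pderiv i Q = 0
      · exact hpi
      · have hlt : (pderiv i Q).totalDegree < D := by
          rw [MvPolynomial.totalDegree]
          rw [Finset.sup_lt_iff (show (⊥ : ℕ) < D from hDpos)]
          intro u hu
          have := support_sum_lt (Q := Q) (i := i) hu
          omega
        refine IH _ hlt _ rfl ?_ (fun x hx => hpd x hx i)
        calc ((pderiv i Q).totalDegree : ℝ) ≤ Q.totalDegree := by
              exact_mod_cast (hQD ▸ hlt.le)
          _ < (m : ℝ) / d := hdeg
    have h0 := totalDegree_eq_zero_of_pderiv Q hall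
    omega

end Stmt15Aux

open Stmt15Aux in
theorem stmt_15 (n : ℕ) (hn : 2 ≤ n) :
    ∃ C : ℝ, 0 < C ∧
      ∀ (d : ℕ) (𝓒 : Finset (PolyCurve n)) (J' : Finset (Fin n → ℝ)) (m : ℕ),
        (∀ γ ∈ 𝓒, γ.Smooth ∧ γ.DegLE d) →
        J'.Nonempty →
        (∀ x ∈ J', IsCurveJoint 𝓒 x) →
        (∀ γ ∈ 𝓒, ((J' : Set (Fin n → ℝ)) ∩ γ.carrier).Nonempty →
          m ≤ ((J' : Set (Fin n → ℝ)) ∩ γ.carrier).ncard) →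
        (∀ Q : MvPolynomial (Fin n) ℝ, (Q.totalDegree : ℝ) < (m : ℝ) / d →
          (∀ x ∈ J', MvPolynomial.eval x Q = 0) → Q = 0) ∧
        C * ((m : ℝ) / d) ^ n ≤ (J'.card : ℝ) := by
  refine ⟨((n : ℝ) ^ n)⁻¹, by positivity, ?_⟩
  intro d 𝓒 J' m h𝓒 hne hjoint hm
  have part1 := vanishing hn d 𝓒 J' m h𝓒 hne hjoint hm
  refine ⟨part1, ?_⟩
  have hJpos : (0 : ℝ) < J'.card := by
    obtain ⟨x0, hx0⟩ := hne
    exact_mod_cast Finset.card_pos.mpr ⟨x0, hx0⟩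
  rcases Nat.eq_zero_or_pos m with rfl | hm1
  · rw [Nat.cast_zero, zero_div, zero_pow (by omega : n ≠ 0), mul_zero]
    exact le_of_lt hJpos
  rcases Nat.eq_zero_or_pos d with rfl | hd1
  · rw [Nat.cast_zero, div_zero, zero_pow (by omega : n ≠ 0), mul_zero]
    exact le_of_lt hJpos
  have hdR : (0 : ℝ) < d := by exact_mod_cast hd1
  have hnR : (0 : ℝ) < n := by exact_mod_cast (by omega : 0 < n)
  set D0 := (m - 1) / d with hD0
  set E := D0 / n with hE
  -- card bound via the dimension of a space of polynomials
  have hcard : (E + 1) ^ n ≤ J'.card := by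
    by_contra hlt
    push_neg at hlt
    obtain ⟨Q, hQ0, hQdeg, hQvan⟩ := exists_vanishing hn hlt
    apply hQ0
    apply part1 Q ?_ hQvan
    have h1 : Q.totalDegree ≤ D0 := le_trans hQdeg (by
      rw [Nat.mul_comm]
      exact Nat.div_mul_le_self D0 n)
    have h2 : D0 * d < m := by
      have h3 := Nat.div_mul_le_self (m - 1) d
      rw [← hD0] at h3
      omega
    rw [lt_div_iff₀ hdR]
    calc ((Q.totalDegree : ℝ)) * d ≤ (D0 : ℝ) * d := by
          apply mul_le_mul_of_nonneg_right _ (le_of_lt hdR)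
          exact_mod_cast h1
      _ < m := by exact_mod_cast h2
  -- the arithmetic : m / (d * n) ≤ E + 1
  have hmd : (m : ℕ) ≤ (D0 + 1) * d := by
    have h : m - 1 < (D0 + 1) * d := by
      refine (Nat.div_lt_iff_lt_mul hd1).mp ?_
      rw [← hD0]
      omega
    omega
  have hDn : D0 + 1 ≤ (E + 1) * n := by
    have h : D0 < (E + 1) * n := by
      refine (Nat.div_lt_iff_lt_mul (show 0 < n by omega)).mp ?_
      rw [← hE]
      omega
    omega
  have hchain : (m : ℝ) / d / n ≤ (E + 1 : ℕ) := by
    rw [div_le_iff₀ hnR, div_le_iff₀ hdR]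
    have : (m : ℕ) ≤ ((E + 1) * n) * d := le_trans hmd (Nat.mul_le_mul_right d hDn)
    calc (m : ℝ) ≤ (((E + 1) * n) * d : ℕ) := by exact_mod_cast this
      _ = ((E + 1 : ℕ) : ℝ) * n * d := by push_cast; ring
  calc ((n : ℝ) ^ n)⁻¹ * ((m : ℝ) / d) ^ n = ((m : ℝ) / d / n) ^ n := by
        rw [div_pow, div_pow, div_eq_inv_mul, div_eq_inv_mul]
        ring
    _ ≤ ((E + 1 : ℕ) : ℝ) ^ n := by
        apply pow_le_pow_left₀ (by positivity) hchain
    _ ≤ (J'.card : ℝ) := by exact_mod_cast hcard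
end

section
/- (Acceptable coloring / Proposition 3) Let L be a finite set of lines in ℝ^n with joint set J. Then there exists a function c : J → L with x ∈ c(x) for all x ∈ J, such that for every line ℓ ∈ L, the number of joints x ∈ ℓ ∩ J with c(x) = ℓ is at most K·|J|^(1/n), where K depends only on n. -/
open MvPolynomial
open scoped Classical

/-- exponent map into finsupp -/
noncomputable def expF {n k : ℕ} (α : Fin n → Fin (k+1)) : Fin n →₀ ℕ :=
  Finsupp.equivFunOnFinite.symm (fun i => (α i : ℕ))

lemma expF_injective {n k : ℕ} : Function.Injective (@expF n k) := by
  intro a b h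
  funext i
  have := congrFun (congrArg (fun f : Fin n →₀ ℕ => (f : Fin n → ℕ)) h) i
  simp [expF] at this
  exact Fin.ext this

lemma vanishing_poly (n : ℕ) (hn : 1 ≤ n) (J : Finset (Fin n → ℝ)) (k : ℕ)
    (hcard : J.card < (k+1)^n) :
    ∃ q : MvPolynomial (Fin n) ℝ, q ≠ 0 ∧ (∀ x ∈ J, eval x q = 0) ∧
      q.totalDegree ≤ n * k := by
  classical
  -- linear map from coefficient vectors to evaluations
  let f : ((Fin n → Fin (k+1)) → ℝ) →ₗ[ℝ] (J → ℝ) :=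
    { toFun := fun c x => ∑ α : Fin n → Fin (k+1), c α * ∏ i, (x : Fin n → ℝ) i ^ (α i : ℕ)
      map_add' := by
        intro a b; funext x; simp [add_mul, Finset.sum_add_distrib]
      map_smul' := by
        intro m a; funext x; simp [Finset.mul_sum, mul_assoc] }
  have hnotinj : ¬ Function.Injective f := by
    intro hinj
    have := LinearMap.finrank_le_finrank_of_injective hinj
    rw [Module.finrank_fintype_fun_eq_card, Module.finrank_fintype_fun_eq_card] at this
    simp only [Fintype.card_fun, Fintype.card_fin, Fintype.card_coe] at this
    omega
  have : ∃ c : (Fin n → Fin (k+1)) → ℝ, c ≠ 0 ∧ f c = 0 := by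
    rw [Function.not_injective_iff] at hnotinj
    obtain ⟨a, b, hab, hne⟩ := hnotinj
    exact ⟨a - b, sub_ne_zero_of_ne hne, by rw [map_sub, hab, sub_self]⟩
  obtain ⟨c, hc0, hfc⟩ := this
  refine ⟨∑ α : Fin n → Fin (k+1), monomial (expF α) (c α), ?_, ?_, ?_⟩
  · intro h
    apply hc0
    funext α₀
    have := congrArg (coeff (expF α₀)) h
    rw [coeff_zero] at this
    simp only [Pi.zero_apply]
    rw [← this, coeff_sum]
    rw [Finset.sum_eq_single α₀]
    · simp [coeff_monomial]
    · intro b _ hb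
      rw [coeff_monomial, if_neg (fun h => hb (expF_injective h))]
    · simp
  · intro x hx
    have := congrFun hfc ⟨x, hx⟩
    simp only [f, LinearMap.coe_mk, AddHom.coe_mk, Pi.zero_apply] at this
    rw [map_sum]
    rw [← this]
    apply Finset.sum_congr rfl
    intro α _
    rw [eval_monomial]
    congr 1
    rw [Finsupp.prod_fintype]
    · rfl
    · intro i; simp
  · apply (totalDegree_finset_sum _ _).trans
    apply Finset.sup_le
    intro α _
    apply (totalDegree_monomial_le _ _).trans
    have : ((expF α).sum fun _ => id) = ∑ i, (α i : ℕ) := by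
      rw [Finsupp.sum_fintype]
      · rfl
      · intro i; rfl
    rw [this]
    calc ∑ i, (α i : ℕ) ≤ ∑ _i : Fin n, k := Finset.sum_le_sum (fun i _ => Nat.lt_succ_iff.mp (α i).2)
    _ = n * k := by simp [Finset.sum_const, mul_comm]

lemma eval_aeval_line {n : ℕ} (q : MvPolynomial (Fin n) ℝ) (g : Fin n → Polynomial ℝ) (t : ℝ) :
    Polynomial.eval t (MvPolynomial.aeval g q)
      = MvPolynomial.eval (fun i => Polynomial.eval t (g i)) q := by
  have h := MvPolynomial.comp_aeval_apply (f := g) (Polynomial.aeval t : Polynomial ℝ →ₐ[ℝ] ℝ) q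
  simp only [Polynomial.coe_aeval_eq_eval] at h
  rw [h]
  rfl

lemma coeff_one_aeval_line {n : ℕ} (q : MvPolynomial (Fin n) ℝ) (x v : Fin n → ℝ) :
    (MvPolynomial.aeval (fun i => Polynomial.C (x i) + Polynomial.X * Polynomial.C (v i)) q).coeff 1
      = ∑ j, v j * MvPolynomial.eval x (pderiv j q) := by
  classical
  induction q using MvPolynomial.induction_on with
  | C a => simp
  | add p q hp hq =>
    simp only [map_add, Polynomial.coeff_add, hp, hq, MvPolynomial.eval_add, mul_add,
      Finset.sum_add_distrib]
  | mul_X p i hp =>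
    have hc0 : (MvPolynomial.aeval
        (fun i => Polynomial.C (x i) + Polynomial.X * Polynomial.C (v i)) p).coeff 0
        = MvPolynomial.eval x p := by
      rw [Polynomial.coeff_zero_eq_eval_zero, eval_aeval_line]
      simp
    rw [map_mul, MvPolynomial.aeval_X]
    rw [mul_add, ← mul_assoc, Polynomial.coeff_add, Polynomial.coeff_mul_C,
      Polynomial.coeff_mul_C]
    rw [show ((1:ℕ)) = 0 + 1 by rfl, Polynomial.coeff_mul_X, hp, hc0]
    have h2 : ∀ j : Fin n, (MvPolynomial.eval x) ((pderiv j) (p * MvPolynomial.X i))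
        = MvPolynomial.eval x (pderiv j p) * x i
          + (if j = i then MvPolynomial.eval x p else 0) := by
      intro j
      rcases eq_or_ne j i with rfl | hij
      · simp [pderiv_mul]; ring
      · simp [pderiv_mul, pderiv_X_of_ne (Ne.symm hij), hij]; ring
    simp only [h2, mul_add, Finset.sum_add_distrib, mul_ite, mul_zero,
      Finset.sum_ite_eq' Finset.univ i]
    simp only [← mul_assoc, ← Finset.sum_mul, Finset.mem_univ, if_pos]
    ring

lemma sum_sub_single {n : ℕ} (s : Fin n →₀ ℕ) (i : Fin n) (hi : 1 ≤ s i) :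
    ((s - Finsupp.single i 1).sum fun _ e => e) + 1 = s.sum fun _ e => e := by
  have hle : Finsupp.single i 1 ≤ s := Finsupp.single_le_iff.mpr hi
  have h1 : (s - Finsupp.single i 1) + Finsupp.single i 1 = s := tsub_add_cancel_of_le hle
  conv_rhs => rw [← h1]
  rw [Finsupp.sum_add_index' (fun _ => rfl) (fun _ _ _ => rfl)]
  simp [Finsupp.sum_single_index]

lemma totalDegree_pderiv_lt {n : ℕ} (q : MvPolynomial (Fin n) ℝ) (i : Fin n)
    (hq : 1 ≤ q.totalDegree) : (pderiv i q).totalDegree < q.totalDegree := by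
  classical
  have h : pderiv i q = ∑ s ∈ q.support, monomial (s - Finsupp.single i 1) (coeff s q * s i) := by
    conv_lhs => rw [as_sum q]
    rw [map_sum]
    simp [pderiv_monomial]
  rw [h]
  apply lt_of_le_of_lt (totalDegree_finset_sum _ _)
  rw [Finset.sup_lt_iff (by simp only [Nat.bot_eq_zero]; omega)]
  intro s hs
  rcases Nat.eq_zero_or_pos (s i) with h0 | h1
  · simp [h0]
    omega
  · apply lt_of_le_of_lt (totalDegree_monomial_le _ _)
    have h2 := sum_sub_single s i h1
    have hle := le_totalDegree hs
    have h3 : ((s - Finsupp.single i 1).sum fun _ => id) = ((s - Finsupp.single i 1).sum fun _ e => e) := rfl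
    omega

lemma exists_pderiv_ne_zero {n : ℕ} (q : MvPolynomial (Fin n) ℝ)
    (hq : 1 ≤ q.totalDegree) : ∃ i, pderiv i q ≠ 0 := by
  classical
  have hq0 : q ≠ 0 := by
    intro h; rw [h] at hq; simp [totalDegree_zero] at hq
  obtain ⟨s, hs, hsum⟩ := Finset.exists_mem_eq_sup q.support
    (Finset.nonempty_iff_ne_empty.mpr (mt MvPolynomial.support_eq_empty.mp hq0)) (fun m => m.sum fun _ e => e)
  have hts : q.totalDegree = s.sum fun _ e => e := by
    rw [MvPolynomial.totalDegree, hsum]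
  have hs1 : 1 ≤ s.sum fun _ e => e := hts ▸ hq
  have : ∃ i, 1 ≤ s i := by
    by_contra hc
    push_neg at hc
    have : ∀ i ∈ s.support, s i = 0 := fun i _ => by have := hc i; omega
    have : (s.sum fun _ e => e) = 0 := Finset.sum_eq_zero this
    omega
  obtain ⟨i, hi⟩ := this
  refine ⟨i, fun h0 => ?_⟩
  have hco : coeff (s - Finsupp.single i 1) (pderiv i q) = coeff s q * s i := by
    have h : pderiv i q = ∑ t ∈ q.support, monomial (t - Finsupp.single i 1) (coeff t q * t i) := by
      conv_lhs => rw [as_sum q]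
      rw [map_sum]
      simp [pderiv_monomial]
    rw [h, coeff_sum]
    rw [Finset.sum_eq_single s]
    · simp [coeff_monomial]
    · intro t ht hts'
      rw [coeff_monomial]
      split_ifs with he
      · rcases Nat.eq_zero_or_pos (t i) with h0' | h1'
        · simp [h0']
        · exfalso
          apply hts'
          have : t - Finsupp.single i 1 + Finsupp.single i 1 = s - Finsupp.single i 1 + Finsupp.single i 1 := by rw [he]
          rwa [tsub_add_cancel_of_le (Finsupp.single_le_iff.mpr h1'),
            tsub_add_cancel_of_le (Finsupp.single_le_iff.mpr hi)] at this
      · rfl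
    · intro hns
      exact absurd hs hns
  rw [h0, coeff_zero] at hco
  have hcs : coeff s q ≠ 0 := mem_support_iff.mp hs
  have : (s i : ℝ) ≠ 0 := by
    simp only [ne_eq, Nat.cast_eq_zero]
    omega
  exact (mul_ne_zero hcs this) hco.symm

lemma mem_carrier_param {n : ℕ} (ℓ : Line n) (x : Fin n → ℝ) (t : ℝ) (hx : x ∈ ℓ.carrier) :
    (fun i => x i + t * ℓ.v i) ∈ ℓ.carrier := by
  obtain ⟨t₀, rfl⟩ := hx
  exact ⟨t₀ + t, by funext i; simp [Pi.add_apply]; ring⟩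

/-- If q vanishes on more than totalDegree points of a line, it vanishes on the line. -/
lemma vanish_on_line {n : ℕ} (q : MvPolynomial (Fin n) ℝ) (ℓ : Line n)
    (J : Finset (Fin n → ℝ)) (hvan : ∀ x ∈ J, eval x q = 0)
    (hmany : q.totalDegree < (J.filter (fun x => x ∈ ℓ.carrier)).card) :
    ∀ y ∈ ℓ.carrier, eval y q = 0 := by
  classical
  set A : Polynomial ℝ :=
    MvPolynomial.aeval (fun i => Polynomial.C (ℓ.p i) + Polynomial.X * Polynomial.C (ℓ.v i)) q
    with hA
  have hdeg : A.natDegree ≤ q.totalDegree := by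
    have := MvPolynomial.aeval_natDegree_le (n := 1) q le_rfl
      (fun i => Polynomial.C (ℓ.p i) + Polynomial.X * Polynomial.C (ℓ.v i))
      (fun i => by
        refine (Polynomial.natDegree_add_le _ _).trans (max_le (by simp) ?_)
        exact (Polynomial.natDegree_mul_le).trans (by simp))
    rw [hA]
    simpa only [mul_one] using this
  have hevalA : ∀ t : ℝ, Polynomial.eval t A = eval (fun i => ℓ.p i + t * ℓ.v i) q := by
    intro t
    rw [hA, eval_aeval_line]
    have : (fun i => Polynomial.eval t (Polynomial.C (ℓ.p i)
        + Polynomial.X * Polynomial.C (ℓ.v i))) = fun i => ℓ.p i + t * ℓ.v i := by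
      funext i; simp; ring
    rw [this]
  set P := J.filter (fun x => x ∈ ℓ.carrier) with hP
  have hAzero : A = 0 := by
    set f : {x // x ∈ P} → ℝ := fun x =>
      (Finset.mem_filter.mp x.2).2.choose with hf
    have hfx : ∀ x : {x // x ∈ P}, (x : Fin n → ℝ) = ℓ.p + f x • ℓ.v := fun x =>
      (Finset.mem_filter.mp x.2).2.choose_spec
    apply Polynomial.eq_zero_of_natDegree_lt_card_of_eval_eq_zero A (f := f)
    · intro a b hab
      have := (hfx a).trans (hab ▸ (hfx b).symm)
      exact Subtype.ext this
    · intro x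
      rw [hevalA]
      have : (fun i => ℓ.p i + f x * ℓ.v i) = (x : Fin n → ℝ) := by
        rw [hfx x]; funext i; simp
      rw [this]
      exact hvan x (Finset.mem_filter.mp x.2).1
    · rw [Fintype.card_coe]
      omega
  intro y hy
  obtain ⟨t, rfl⟩ := hy
  have := hevalA t
  rw [hAzero] at this
  simp only [Polynomial.eval_zero] at this
  have h2 : (fun i => ℓ.p i + t * ℓ.v i) = ℓ.p + t • ℓ.v := by
    funext i; simp
  rw [← h2]
  exact this.symm

/-- directional derivative vanishes -/
lemma dir_deriv_zero {n : ℕ} (q : MvPolynomial (Fin n) ℝ) (ℓ : Line n)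
    (hvan : ∀ y ∈ ℓ.carrier, eval y q = 0) (x : Fin n → ℝ) (hx : x ∈ ℓ.carrier) :
    ∑ j, ℓ.v j * eval x (pderiv j q) = 0 := by
  classical
  rw [← coeff_one_aeval_line]
  set A : Polynomial ℝ :=
    MvPolynomial.aeval (fun i => Polynomial.C (x i) + Polynomial.X * Polynomial.C (ℓ.v i)) q
  have hAzero : A = 0 := by
    apply Polynomial.funext
    intro t
    rw [Polynomial.eval_zero, eval_aeval_line]
    simp only [Polynomial.eval_add, Polynomial.eval_C, Polynomial.eval_mul, Polynomial.eval_X]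
    exact hvan _ (mem_carrier_param ℓ x t hx)
  rw [hAzero, Polynomial.coeff_zero]

/-- if all dot products with a linearly independent family vanish, the vector is zero -/
lemma dot_zero_of_indep {n : ℕ} (v : Fin n → (Fin n → ℝ))
    (hli : LinearIndependent ℝ v) (w : Fin n → ℝ)
    (h : ∀ i, ∑ j, v i j * w j = 0) : w = 0 := by
  classical
  let φ : (Fin n → ℝ) →ₗ[ℝ] ℝ :=
    { toFun := fun u => ∑ j, u j * w j
      map_add' := by intro a b; simp [add_mul, Finset.sum_add_distrib]
      map_smul' := by intro m a; simp [Finset.mul_sum, mul_assoc] }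
  have hcard : Fintype.card (Fin n) = Module.finrank ℝ (Fin n → ℝ) := by
    simp [Module.finrank_fintype_fun_eq_card]
  have hspan : ⊤ ≤ Submodule.span ℝ (Set.range v) :=
    ge_of_eq (hli.span_eq_top_of_card_eq_finrank' hcard)
  have hw : φ w = 0 := by
    refine Submodule.span_induction (p := fun u _ => φ u = 0) ?_ ?_ ?_ ?_ (hspan trivial)
    · rintro _ ⟨i, rfl⟩; exact h i
    · simp
    · intro a b _ _ ha hb; rw [map_add, ha, hb, add_zero]
    · intro r a _ ha; rw [map_smul, ha, smul_zero]
  simp only [φ, LinearMap.coe_mk, AddHom.coe_mk] at hw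
  funext j
  have hterm := (Finset.sum_eq_zero_iff_of_nonneg
    (fun j' _ => mul_self_nonneg (w j'))).mp hw j (Finset.mem_univ j)
  simpa using mul_self_eq_zero.mp hterm

/-- A constant polynomial lemma -/
lemma eq_C_of_totalDegree_eq_zero {n : ℕ} (q : MvPolynomial (Fin n) ℝ)
    (h : q.totalDegree = 0) : q = C (coeff 0 q) := by
  apply MvPolynomial.ext
  intro m
  rw [coeff_C]
  rcases eq_or_ne (0 : Fin n →₀ ℕ) m with rfl | hm
  · simp
  · rw [if_neg hm]
    by_contra hc
    have hmem : m ∈ q.support := mem_support_iff.mpr hc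
    have h1 : (m.sum fun _ e => e) = 0 := Nat.le_zero.mp (h ▸ le_totalDegree hmem)
    apply hm
    ext i
    simp only [Finsupp.coe_zero, Pi.zero_apply]
    by_contra hi
    have himem : i ∈ m.support := Finsupp.mem_support_iff.mpr (fun hh => hi hh.symm)
    have := (Finset.sum_eq_zero_iff.mp h1) i himem
    exact hi this.symm

lemma exists_good_line {n : ℕ} (hn : 1 ≤ n) (L : Finset (Line n))
    (J : Finset (Fin n → ℝ)) (hJ : ∀ x ∈ J, IsJoint L x) (hne : J.Nonempty)
    (k : ℕ) (hcard : J.card < (k+1)^n) :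
    ∃ ℓ ∈ L, (J.filter (fun x => x ∈ ℓ.carrier)).card ≤ n * k := by
  by_contra hcon
  push_neg at hcon
  -- minimal degree nonzero vanishing polynomial
  set S : Set ℕ := {d | ∃ q : MvPolynomial (Fin n) ℝ, q ≠ 0 ∧ (∀ x ∈ J, eval x q = 0) ∧
    q.totalDegree = d} with hS
  obtain ⟨q₀, hq₀0, hq₀v, hq₀d⟩ := vanishing_poly n hn J k hcard
  have hSne : S.Nonempty := ⟨q₀.totalDegree, q₀, hq₀0, hq₀v, rfl⟩
  obtain ⟨q, hq0, hqv, hqd⟩ := Nat.sInf_mem hSne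
  have hmin : ∀ q' : MvPolynomial (Fin n) ℝ, q' ≠ 0 → (∀ x ∈ J, eval x q' = 0) →
      sInf S ≤ q'.totalDegree := fun q' h1 h2 => Nat.sInf_le ⟨q', h1, h2, rfl⟩
  have hdle : q.totalDegree ≤ n * k := hqd ▸ (hmin q₀ hq₀0 hq₀v).trans hq₀d
  have hd1 : 1 ≤ q.totalDegree := by
    by_contra hc
    push_neg at hc
    interval_cases h : q.totalDegree
    · obtain ⟨x, hx⟩ := hne
      have hqc := eq_C_of_totalDegree_eq_zero q h
      have hev := hqv x hx
      rw [hqc, eval_C] at hev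
      rw [hqc, hev] at hq0
      simp at hq0
  -- q vanishes on every line of L
  have hvline : ∀ ℓ ∈ L, ∀ y ∈ ℓ.carrier, eval y q = 0 := by
    intro ℓ hℓ
    apply vanish_on_line q ℓ J hqv
    exact lt_of_le_of_lt hdle (hcon ℓ hℓ)
  -- gradients vanish on J
  have hgrad : ∀ x ∈ J, ∀ j, eval x (pderiv j q) = 0 := by
    intro x hx
    obtain ⟨f, hfL, hfx, hli⟩ := hJ x hx
    have hdot : ∀ i, ∑ j, (f i).v j * eval x (pderiv j q) = 0 := fun i =>
      dir_deriv_zero q (f i) (hvline (f i) (hfL i)) x (hfx i)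
    have := dot_zero_of_indep (fun i => (f i).v) hli
      (fun j => eval x (pderiv j q)) hdot
    intro j
    exact congrFun this j
  -- contradiction with minimality
  obtain ⟨i, hpne⟩ := exists_pderiv_ne_zero q hd1
  have := hmin (pderiv i q) hpne (fun x hx => hgrad x hx i)
  have hlt := totalDegree_pderiv_lt q i hd1
  omega

noncomputable def someLine (n : ℕ) (hn : 1 ≤ n) : Line n :=
  ⟨0, fun _ => 1, fun h => one_ne_zero (congrFun h ⟨0, hn⟩)⟩

lemma rpow_inv_natpow (m n : ℕ) (hn : 1 ≤ n) :
    (((m : ℝ) ^ ((1:ℝ)/n)) ^ (n : ℕ)) = (m : ℝ) := by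
  rw [← Real.rpow_natCast ((m:ℝ) ^ ((1:ℝ)/n)) n, ← Real.rpow_mul (Nat.cast_nonneg m)]
  rw [one_div_mul_cancel (Nat.cast_ne_zero.mpr (by omega) : (n:ℝ) ≠ 0)]
  exact Real.rpow_one _

lemma greedy_aux {n : ℕ} (hn : 2 ≤ n) : ∀ (N : ℕ) (L : Finset (Line n)),
    L.card ≤ N → ∀ J : Finset (Fin n → ℝ), (∀ x ∈ J, IsJoint L x) →
    ∃ c : (Fin n → ℝ) → Line n,
      (∀ x ∈ J, c x ∈ L ∧ x ∈ (c x).carrier) ∧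
      ∀ ℓ ∈ L, ((J.filter (fun x => c x = ℓ)).card : ℝ) ≤
        n * (J.card : ℝ) ^ ((1:ℝ)/n) := by
  intro N
  induction N with
  | zero =>
    intro L hL J hJ
    rw [Nat.le_zero, Finset.card_eq_zero] at hL
    subst hL
    refine ⟨fun _ => someLine n (by omega), ?_, ?_⟩
    · intro x hx
      obtain ⟨f, hfL, -, -⟩ := hJ x hx
      exact absurd (hfL ⟨0, by omega⟩) (Finset.notMem_empty _)
    · intro ℓ hℓ
      exact absurd hℓ (Finset.notMem_empty _)
  | succ N ih =>
    intro L hL J hJ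
    rcases J.eq_empty_or_nonempty with rfl | hne
    · refine ⟨fun _ => someLine n (by omega), by simp, ?_⟩
      intro ℓ hℓ
      simp only [Finset.filter_empty, Finset.card_empty, Nat.cast_zero]
      rw [Real.zero_rpow (by positivity : ((1:ℝ)/(n:ℝ)) ≠ 0)]
      simp
    · -- J nonempty
      set k := ⌊(J.card : ℝ) ^ ((1:ℝ)/n)⌋₊ with hk
      have hcard : J.card < (k+1)^n := by
        have h1 : (J.card : ℝ) ^ ((1:ℝ)/n) < (k : ℝ) + 1 := Nat.lt_floor_add_one _
        have h2 : (J.card : ℝ) < ((k : ℝ) + 1) ^ (n : ℕ) := by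
          calc (J.card : ℝ) = ((J.card : ℝ) ^ ((1:ℝ)/n)) ^ (n : ℕ) :=
                (rpow_inv_natpow _ _ (by omega)).symm
          _ < ((k : ℝ) + 1) ^ (n : ℕ) := by
              apply pow_lt_pow_left₀ h1 (Real.rpow_nonneg (Nat.cast_nonneg _) _)
              omega
        exact_mod_cast h2
      obtain ⟨ℓ₀, hℓ₀L, hℓ₀c⟩ := exists_good_line (by omega) L J hJ hne k hcard
      set J' := J.filter (fun x => x ∉ ℓ₀.carrier) with hJ'
      set L' := L.erase ℓ₀ with hL'
      have hL'card : L'.card ≤ N := by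
        rw [hL']
        have := Finset.card_erase_of_mem hℓ₀L
        omega
      have hJ'j : ∀ x ∈ J', IsJoint L' x := by
        intro x hx
        obtain ⟨hxJ, hxc⟩ := Finset.mem_filter.mp hx
        obtain ⟨f, hfL, hfc, hli⟩ := hJ x hxJ
        refine ⟨f, fun i => Finset.mem_erase.mpr ⟨?_, hfL i⟩, hfc, hli⟩
        intro hcontr
        exact hxc (hcontr ▸ hfc i)
      obtain ⟨c', hc'1, hc'2⟩ := ih L' hL'card J' hJ'j
      refine ⟨fun x => if x ∈ ℓ₀.carrier then ℓ₀ else c' x, ?_, ?_⟩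
      · intro x hx
        by_cases hxc : x ∈ ℓ₀.carrier
        · simp only [if_pos hxc]
          exact ⟨hℓ₀L, hxc⟩
        · simp only [if_neg hxc]
          have hx' : x ∈ J' := Finset.mem_filter.mpr ⟨hx, hxc⟩
          obtain ⟨h1, h2⟩ := hc'1 x hx'
          exact ⟨Finset.mem_of_mem_erase h1, h2⟩
      · intro ℓ hℓ
        have hmono : ((J'.card : ℝ)) ^ ((1:ℝ)/n) ≤ ((J.card : ℝ)) ^ ((1:ℝ)/n) := by
          apply Real.rpow_le_rpow (Nat.cast_nonneg _)
          · exact_mod_cast Finset.card_filter_le _ _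
          · positivity
        rcases eq_or_ne ℓ ℓ₀ with rfl | hne'
        · -- colored by ℓ₀ only on its carrier
          have hsub : J.filter (fun x => (if x ∈ ℓ.carrier then ℓ else c' x) = ℓ) ⊆
              J.filter (fun x => x ∈ ℓ.carrier) := by
            intro x hx
            obtain ⟨hxJ, hxe⟩ := Finset.mem_filter.mp hx
            refine Finset.mem_filter.mpr ⟨hxJ, ?_⟩
            by_contra hxc
            rw [if_neg hxc] at hxe
            have hx' : x ∈ J' := Finset.mem_filter.mpr ⟨hxJ, hxc⟩
            have := (hc'1 x hx').1
            rw [hxe] at this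
            exact (Finset.notMem_erase ℓ L) this
          calc ((J.filter (fun x => (if x ∈ ℓ.carrier then ℓ else c' x) = ℓ)).card : ℝ)
              ≤ ((J.filter (fun x => x ∈ ℓ.carrier)).card : ℝ) := by
                exact_mod_cast Finset.card_le_card hsub
            _ ≤ (n : ℝ) * k := by exact_mod_cast hℓ₀c
            _ ≤ n * (J.card : ℝ) ^ ((1:ℝ)/n) := by
                apply mul_le_mul_of_nonneg_left _ (Nat.cast_nonneg n)
                exact Nat.floor_le (Real.rpow_nonneg (Nat.cast_nonneg _) _)
        · have hℓL' : ℓ ∈ L' := Finset.mem_erase.mpr ⟨hne', hℓ⟩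
          have hsub : J.filter (fun x => (if x ∈ ℓ₀.carrier then ℓ₀ else c' x) = ℓ) ⊆
              J'.filter (fun x => c' x = ℓ) := by
            intro x hx
            obtain ⟨hxJ, hxe⟩ := Finset.mem_filter.mp hx
            by_cases hxc : x ∈ ℓ₀.carrier
            · rw [if_pos hxc] at hxe
              exact absurd hxe.symm hne'
            · rw [if_neg hxc] at hxe
              exact Finset.mem_filter.mpr ⟨Finset.mem_filter.mpr ⟨hxJ, hxc⟩, hxe⟩
          calc ((J.filter (fun x => (if x ∈ ℓ₀.carrier then ℓ₀ else c' x) = ℓ)).card : ℝ)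
              ≤ ((J'.filter (fun x => c' x = ℓ)).card : ℝ) := by
                exact_mod_cast Finset.card_le_card hsub
            _ ≤ n * (J'.card : ℝ) ^ ((1:ℝ)/n) := hc'2 ℓ hℓL'
            _ ≤ n * (J.card : ℝ) ^ ((1:ℝ)/n) :=
                mul_le_mul_of_nonneg_left hmono (Nat.cast_nonneg n)

lemma joints_finite {n : ℕ} (hn : 2 ≤ n) (L : Finset (Line n)) :
    (joints L).Finite := by
  classical
  set S : Set (Line n × Line n) := {q | q.1 ∈ L ∧ q.2 ∈ L ∧
    ∀ a b : ℝ, a • q.1.v + b • q.2.v = 0 → a = 0 ∧ b = 0} with hS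
  have hSfin : S.Finite := by
    apply Set.Finite.subset (Set.Finite.prod L.finite_toSet L.finite_toSet)
    rintro ⟨a, b⟩ ⟨h1, h2, -⟩
    exact ⟨h1, h2⟩
  have hTfin : ∀ q ∈ S, (q.1.carrier ∩ q.2.carrier).Finite := by
    rintro ⟨ℓ₁, ℓ₂⟩ ⟨-, -, hind⟩
    apply Set.Subsingleton.finite
    rintro x ⟨⟨t, rfl⟩, ⟨s, hx2⟩⟩ y ⟨⟨t', hy1⟩, ⟨s', hy2⟩⟩
    -- x = p1 + t v1 = p2 + s v2, y = p1 + t' v1 = p2 + s' v2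
    have key : (t - t') • ℓ₁.v + (s' - s) • ℓ₂.v = 0 := by
      have hcomb : (t - t') • ℓ₁.v + (s' - s) • ℓ₂.v
          = ((ℓ₁.p + t • ℓ₁.v) - (ℓ₁.p + t' • ℓ₁.v))
            + ((ℓ₂.p + s' • ℓ₂.v) - (ℓ₂.p + s • ℓ₂.v)) := by
        module
      rw [hcomb, ← hy1, ← hy2, hx2]
      abel
    obtain ⟨ht, -⟩ := hind _ _ key
    have htt : t = t' := by
      have := sub_eq_zero.mp ht
      linarith [this]
    rw [hy1, htt]
  have hsub : joints L ⊆ ⋃ q ∈ S, q.1.carrier ∩ q.2.carrier := by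
    intro x hx
    obtain ⟨f, hfL, hfc, hli⟩ := hx
    set i0 : Fin n := ⟨0, by omega⟩
    set i1 : Fin n := ⟨1, by omega⟩
    have hne : i0 ≠ i1 := by simp [i0, i1, Fin.ext_iff]
    have hmem : (f i0, f i1) ∈ S := by
      refine ⟨hfL i0, hfL i1, ?_⟩
      intro a b hab
      have hfun := Fintype.linearIndependent_iff.mp hli
      set g : Fin n → ℝ := fun i => if i = i0 then a else if i = i1 then b else 0 with hg
      have hsum : ∑ i, g i • (f i).v = a • (f i0).v + b • (f i1).v := by
        rw [← Finset.sum_subset (Finset.subset_univ {i0, i1})]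
        · rw [Finset.sum_pair hne]
          simp [hg, hne.symm]
        · intro i _ hi
          simp only [Finset.mem_insert, Finset.mem_singleton, not_or] at hi
          simp [hg, hi.1, hi.2]
      have := hfun g (by rw [hsum]; exact hab)
      constructor
      · have h0 := this i0; simpa [hg] using h0
      · have h1 := this i1
        simp only [hg] at h1
        simpa [hne.symm] using h1
    exact Set.mem_biUnion hmem ⟨hfc i0, hfc i1⟩
  exact Set.Finite.subset (Set.Finite.biUnion hSfin hTfin) hsub


theorem stmt_17 (n : ℕ) (hn : 2 ≤ n) :
    ∃ K : ℝ, 0 < K ∧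
      ∀ L : Finset (Line n),
        ∃ c : (Fin n → ℝ) → Line n,
          (∀ x ∈ joints L, c x ∈ L ∧ x ∈ (c x).carrier) ∧
          ∀ ℓ ∈ L, (({x ∈ joints L | c x = ℓ}).ncard : ℝ) ≤
            K * ((joints L).ncard : ℝ) ^ ((1 : ℝ) / n) := by
  refine ⟨n, by exact_mod_cast (by omega : 0 < n), ?_⟩
  intro L
  have hfin := joints_finite hn L
  set J := hfin.toFinset with hJdef
  have hJmem : ∀ x, x ∈ J ↔ x ∈ joints L := fun x => Set.Finite.mem_toFinset hfin
  obtain ⟨c, hc1, hc2⟩ := greedy_aux hn L.card L le_rfl J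
    (fun x hx => (hJmem x).mp hx)
  refine ⟨c, fun x hx => hc1 x ((hJmem x).mpr hx), ?_⟩
  intro ℓ hℓ
  have hset : {x ∈ joints L | c x = ℓ} = ↑(J.filter (fun x => c x = ℓ)) := by
    ext x
    simp only [Set.mem_setOf_eq, Finset.coe_filter, hJmem]
  have hncard : (joints L).ncard = J.card := by
    rw [Set.ncard_eq_toFinset_card _ hfin]
  rw [hset, Set.ncard_coe_finset, hncard]
  exact hc2 ℓ hℓ
end
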